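/- Soares' count: if V = Z(F_1,…,F_{n−m}) ⊂ P^n is a smooth complete intersection of multidegree (d_1,…,d_{n−m}) invariant by a degree-k foliation by curves F which is non-degenerate along V, then the number of singularities of F on V, counted with multiplicity, equals N(F,V) = (d_1⋯d_{n−m}) · Σ_{j=0}^{m} [ Σ_{δ=0}^{j} (−1)^δ W_δ^{(n−m)}(d_1−1,…,d_{n−m}−1) ] k^{m−j}. Prove the purely algebraic reformulation: ∫_V c_m(T_V ⊗ O(k−1)) computed from c(T_V) = (1+h)^{n+1}/∏(1+d_i h) and ∫_V h^m = d_1⋯d_{n−m} equals the stated closed-form, i.e., the coefficient identity Σ_{i=0}^{m} τ_i^{(n−m)}(d_1,…,d_{n−m}) (k−1)^{m−i} = Σ_{j=0}^{m} [Σ_{δ=0}^{j} (−1)^δ W_δ^{(n−m)}(d_1−1,…,d_{n−m}−1)] k^{m−j}. -/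

import Mathlib

/-- Complete homogeneous (Wronski) symmetric function of degree `δ` in `q` variables. -/
def wronski {R : Type*} [CommRing R] (q δ : ℕ) (k : Fin q → R) : R :=
  ∑ a ∈ Finset.Nat.antidiagonalTuple q δ, ∏ j, k j ^ a j

/-- `τ_i^{(q)} = ∑_{j=0}^{i} (−1)^j C(n+1, i−j) W_j^{(q)}`. -/
def tauW {R : Type*} [CommRing R] (n q i : ℕ) (k : Fin q → R) : R :=
  ∑ j ∈ Finset.range (i + 1), (-1 : R) ^ j * ((n + 1).choose (i - j) : R) * wronski q j k

namespace SoaresAux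

open PowerSeries Finset

variable {R : Type*} [CommRing R]

noncomputable def geo (c : R) : PowerSeries R := PowerSeries.mk fun n => c ^ n

@[simp] lemma coeff_geo (c : R) (n : ℕ) : (PowerSeries.coeff n) (geo c) = c ^ n := by
  simp [geo]

lemma one_sub_mul_geo (c : R) : ((1 : PowerSeries R) - C c * X) * geo c = 1 := by
  ext n
  rw [sub_mul, one_mul, map_sub, mul_assoc]
  cases n with
  | zero => simp
  | succ n => simp [coeff_succ_X_mul, pow_succ, mul_comm]

lemma one_add_mul_geo (c : R) : ((1 : PowerSeries R) + C c * X) * geo (-c) = 1 := by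
  have := one_sub_mul_geo (-c)
  rw [map_neg] at this
  simpa using this

lemma geo_one_eq : (1 : PowerSeries R) + X * geo 1 = geo 1 := by
  ext n
  cases n with
  | zero => simp
  | succ n => simp [coeff_succ_X_mul]

lemma one_sub_X_mul_geo_one : ((1 : PowerSeries R) - X) * geo (1 : R) = 1 := by
  have := one_sub_mul_geo (1 : R)
  rwa [map_one, one_mul] at this

lemma mk_wronski_eq_prod (q : ℕ) (E : Fin q → R) :
    PowerSeries.mk (fun δ => wronski q δ E) = ∏ t, geo (E t) := by
  ext δ
  rw [coeff_mk, PowerSeries.coeff_prod]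
  unfold wronski
  refine Finset.sum_nbij' (fun a => Finsupp.equivFunOnFinite.symm a) (fun l => ⇑l) ?_ ?_ ?_ ?_ ?_
  · intro a ha
    rw [Finset.Nat.mem_antidiagonalTuple] at ha
    simp [Finset.mem_finsuppAntidiag, ha]
  · intro l hl
    rw [Finset.mem_finsuppAntidiag] at hl
    rw [Finset.Nat.mem_antidiagonalTuple]
    simpa using hl.1
  · intro a ha; exact Finsupp.equivFunOnFinite.apply_symm_apply a
  · intro l hl; exact Finsupp.equivFunOnFinite.symm_apply_apply l
  · intro a ha
    simp [coeff_geo]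

lemma wronski_neg (q δ : ℕ) (E : Fin q → R) :
    wronski q δ (fun t => - E t) = (-1 : R) ^ δ * wronski q δ E := by
  unfold wronski
  rw [Finset.mul_sum]
  refine Finset.sum_congr rfl fun a ha => ?_
  rw [Finset.Nat.mem_antidiagonalTuple] at ha
  calc ∏ j, (- E j) ^ a j = ∏ j, ((-1 : R) ^ a j * E j ^ a j) := by
        refine Finset.prod_congr rfl fun j _ => ?_
        rw [neg_eq_neg_one_mul (E j), mul_pow]
    _ = (∏ j, (-1 : R) ^ a j) * ∏ j, E j ^ a j := Finset.prod_mul_distrib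
    _ = (-1 : R) ^ δ * ∏ j, E j ^ a j := by rw [Finset.prod_pow_eq_pow_sum, ha]

lemma prod_one_add_mul (q : ℕ) (D : Fin q → R) :
    (∏ t, ((1 : PowerSeries R) + C (D t) * X)) *
      PowerSeries.mk (fun δ => wronski q δ (fun t => - D t)) = 1 := by
  rw [mk_wronski_eq_prod, ← Finset.prod_mul_distrib]
  exact Finset.prod_eq_one fun t _ => one_add_mul_geo (D t)

lemma coeff_one_add_CX_pow (r : R) (N c : ℕ) :
    (PowerSeries.coeff c) (((1 : PowerSeries R) + C r * X) ^ N) =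
      r ^ c * (N.choose c : R) := by
  rw [add_comm (1 : PowerSeries R), add_pow]
  rw [map_sum]
  have h : ∀ j ∈ Finset.range (N + 1),
      (PowerSeries.coeff c) ((C r * X) ^ j * 1 ^ (N - j) * (N.choose j : PowerSeries R))
        = if c = j then r ^ c * (N.choose c : R) else 0 := by
    intro j hj
    rw [one_pow, mul_one, mul_pow, ← map_pow, ← map_natCast C (N.choose j),
      mul_right_comm, ← map_mul, coeff_C_mul_X_pow]
    split_ifs with hc
    · subst hc; ring
    · rfl
  rw [Finset.sum_congr rfl h, Finset.sum_ite_eq]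
  split_ifs with hc
  · rfl
  · rw [Finset.mem_range, not_lt] at hc
    rw [Nat.choose_eq_zero_of_lt (by omega), Nat.cast_zero, mul_zero]

lemma coeff_mul_geo (f : PowerSeries R) (c : R) (m : ℕ) :
    (PowerSeries.coeff m) (f * geo c) =
      ∑ i ∈ Finset.range (m + 1), (PowerSeries.coeff i) f * c ^ (m - i) := by
  rw [PowerSeries.coeff_mul, Finset.Nat.sum_antidiagonal_eq_sum_range_succ_mk]
  exact Finset.sum_congr rfl fun i _ => by rw [coeff_geo]

lemma coeff_tau (n q : ℕ) (D : Fin q → R) (i : ℕ) :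
    (PowerSeries.coeff i)
      (PowerSeries.mk (fun δ => wronski q δ (fun t => - D t)) * (1 + X) ^ (n + 1)) =
      tauW n q i D := by
  rw [PowerSeries.coeff_mul, Finset.Nat.sum_antidiagonal_eq_sum_range_succ_mk]
  unfold tauW
  refine Finset.sum_congr rfl fun j _ => ?_
  rw [coeff_mk, wronski_neg]
  have : ((1 : PowerSeries R) + X) = 1 + C 1 * X := by rw [map_one, one_mul]
  rw [this, coeff_one_add_CX_pow, one_pow, one_mul]
  ring

lemma coeff_one_sub_X_pow_mul_geo (p : ℕ) (c : R) :
    (PowerSeries.coeff p) (((1 : PowerSeries R) - X) ^ p * geo c) = (c - 1) ^ p := by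
  have h1 : ((1 : PowerSeries R) - X) = 1 + C (-1) * X := by
    rw [map_neg, map_one]; ring
  rw [coeff_mul_geo, sub_pow c 1 p, ← Finset.sum_range_reflect]
  refine Finset.sum_congr rfl fun i hi => ?_
  rw [Finset.mem_range] at hi
  have him : i ≤ p := by omega
  rw [h1, coeff_one_add_CX_pow]
  rw [Nat.sub_sub, show 1 + i = i + 1 by omega, Nat.succ_sub_succ]
  rw [Nat.choose_symm him, one_pow, Nat.sub_sub_self him]
  have hsign : ((-1 : R)) ^ (i + p) = (-1 : R) ^ (p - i) := by
    rw [show i + p = (p - i) + 2 * i by omega, pow_add, pow_mul, neg_one_sq, one_pow,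
      mul_one]
  rw [hsign]; ring

lemma key (m q : ℕ) (D : Fin q → R) (k : R) :
    ∑ i ∈ Finset.range (m + 1), tauW (m + q) q i D * (k - 1) ^ (m - i) =
      ∑ j ∈ Finset.range (m + 1),
        (∑ δ ∈ Finset.range (j + 1),
          (-1 : R) ^ δ * wronski q δ (fun t => D t - 1)) * k ^ (m - j) := by
  have hgeo1 : ((1 : PowerSeries R) - X) * geo 1 = 1 := one_sub_X_mul_geo_one
  have hpow : ∀ N : ℕ, ((1 - X : PowerSeries R)) ^ N * (geo 1) ^ N = 1 := fun N => by
    rw [← mul_pow, hgeo1, one_pow]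
  set Wneg : PowerSeries R := PowerSeries.mk (fun δ => wronski q δ (fun t => - D t)) with hWneg
  set Sser : PowerSeries R := PowerSeries.mk (fun δ => wronski q δ (fun t => 1 - D t)) with hSser
  set Tp : Polynomial R :=
    ∑ i ∈ Finset.range (m + 1), Polynomial.C (tauW (m + q) q i D) * Polynomial.X ^ i with hTp
  -- coefficients of Tp
  have hTpc : ∀ c, c ≤ m → Tp.coeff c = tauW (m + q) q c D := by
    intro c hc
    rw [hTp, Polynomial.finset_sum_coeff]
    have h : ∀ i ∈ Finset.range (m + 1),
        (Polynomial.C (tauW (m + q) q i D) * Polynomial.X ^ i).coeff c =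
          if c = i then tauW (m + q) q c D else 0 := by
      intro i _
      rw [Polynomial.coeff_C_mul, Polynomial.coeff_X_pow]
      split_ifs with hci
      · rw [mul_one, hci]
      · rw [mul_zero]
    rw [Finset.sum_congr rfl h, Finset.sum_ite_eq, if_pos (Finset.mem_range.mpr (by omega))]
  have hdvd1 : (X : PowerSeries R) ^ (m + 1) ∣ (Wneg * (1 + X) ^ (m + q + 1) - (Tp : PowerSeries R)) := by
    rw [PowerSeries.X_pow_dvd_iff]
    intro c hc
    rw [map_sub, hWneg, coeff_tau (m + q) q D c, Polynomial.coeff_coe, hTpc c (by omega),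
      sub_self]
  have hTmul : (Wneg * (1 + X) ^ (m + q + 1)) * ∏ t, ((1 : PowerSeries R) + C (D t) * X)
      = (1 + X) ^ (m + q + 1) := by
    have h := prod_one_add_mul q D
    rw [← hWneg] at h
    linear_combination ((1 + X : PowerSeries R) ^ (m + q + 1)) * h
  -- the polynomial P and its divisibility
  set P : Polynomial R :=
    Tp * (∏ t, ((1 : Polynomial R) + Polynomial.C (D t) * Polynomial.X))
      - (1 + Polynomial.X) ^ (m + q + 1) with hP
  have hprodcast : ((∏ t, ((1 : Polynomial R) + Polynomial.C (D t) * Polynomial.X) : Polynomial R)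
      : PowerSeries R) = ∏ t, ((1 : PowerSeries R) + C (D t) * X) := by
    rw [← Polynomial.coeToPowerSeries.ringHom_apply, map_prod]
    refine Finset.prod_congr rfl fun t _ => ?_
    rw [map_add, map_mul, map_one, Polynomial.coeToPowerSeries.ringHom_apply,
      Polynomial.coeToPowerSeries.ringHom_apply, Polynomial.coe_C, Polynomial.coe_X]
  have hPdvd : (Polynomial.X : Polynomial R) ^ (m + 1) ∣ P := by
    rw [Polynomial.X_pow_dvd_iff]
    intro c hc
    rw [hP, Polynomial.coeff_sub, ← Polynomial.coeff_coe, ← Polynomial.coeff_coe,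
      Polynomial.coe_mul, hprodcast, Polynomial.coe_pow]
    have e1 : ((1 + Polynomial.X : Polynomial R) : PowerSeries R) = 1 + X := by
      rw [Polynomial.coe_add, Polynomial.coe_one, Polynomial.coe_X]
    rw [e1]
    have e2 : ((Tp : PowerSeries R) * ∏ t, ((1 : PowerSeries R) + C (D t) * X))
        - (1 + X) ^ (m + q + 1)
        = ((Tp : PowerSeries R) - Wneg * (1 + X) ^ (m + q + 1)) *
            ∏ t, ((1 : PowerSeries R) + C (D t) * X) := by
      linear_combination hTmul
    rw [← map_sub, e2]
    have hd' : (X : PowerSeries R) ^ (m + 1) ∣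
        ((Tp : PowerSeries R) - Wneg * (1 + X) ^ (m + q + 1)) := by
      rw [← neg_sub (Wneg * (1 + X) ^ (m + q + 1)) (Tp : PowerSeries R)]
      exact dvd_neg.mpr hdvd1
    have : (X : PowerSeries R) ^ (m + 1) ∣
        ((Tp : PowerSeries R) - Wneg * (1 + X) ^ (m + q + 1)) *
          ∏ t, ((1 : PowerSeries R) + C (D t) * X) :=
      Dvd.dvd.mul_right hd' _
    exact PowerSeries.X_pow_dvd_iff.mp this c hc
  obtain ⟨Q, hQ⟩ := hPdvd
  -- substitution x ↦ X * geo 1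
  set Φ : PowerSeries R := Polynomial.aeval ((X : PowerSeries R) * geo 1) Tp with hΦ
  have haP : Polynomial.aeval ((X : PowerSeries R) * geo 1) P
      = Φ * (∏ t, ((1 : PowerSeries R) + C (D t) * (X * geo 1))) - (geo 1) ^ (m + q + 1) := by
    rw [hP, map_sub, map_mul, map_prod, map_pow, map_add, map_one, Polynomial.aeval_X, hΦ]
    have hfac : ∀ t : Fin q, Polynomial.aeval ((X : PowerSeries R) * geo 1)
        ((1 : Polynomial R) + Polynomial.C (D t) * Polynomial.X)
        = 1 + C (D t) * (X * geo 1) := by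
      intro t
      rw [map_add, map_one, map_mul, Polynomial.aeval_C, Polynomial.aeval_X,
        ← PowerSeries.C_eq_algebraMap]
    rw [Finset.prod_congr rfl fun t _ => hfac t, geo_one_eq]
  have hWdvd : (X : PowerSeries R) ^ (m + 1) ∣
      Φ * (∏ t, ((1 : PowerSeries R) + C (D t) * (X * geo 1))) - (geo 1) ^ (m + q + 1) := by
    rw [← haP, hQ, map_mul, map_pow, Polynomial.aeval_X]
    exact Dvd.dvd.mul_right (pow_dvd_pow_of_dvd (Dvd.intro _ rfl) (m + 1)) _
  -- rewrite factors
  have hfac2 : ∀ t : Fin q, (1 : PowerSeries R) + C (D t) * (X * geo 1)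
      = (1 + C (D t - 1) * X) * geo 1 := by
    intro t
    have hg := geo_one_eq (R := R)
    rw [map_sub, map_one]
    linear_combination hg
  have hprod2 : ∏ t, ((1 : PowerSeries R) + C (D t) * (X * geo 1))
      = (∏ t, ((1 : PowerSeries R) + C (D t - 1) * X)) * (geo 1) ^ q := by
    rw [Finset.prod_congr rfl fun t _ => hfac2 t, Finset.prod_mul_distrib, Finset.prod_const,
      Finset.card_univ, Fintype.card_fin]
  have hSmul : (∏ t, ((1 : PowerSeries R) + C (D t - 1) * X)) * Sser = 1 := by
    have h := prod_one_add_mul q (fun t => D t - 1)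
    have he : (fun t => -(D t - 1)) = fun t => (1 : R) - D t := by funext t; ring
    rw [he] at h
    rw [hSser]
    exact h
  -- the key algebraic identity
  have hkey : (Φ * (∏ t, ((1 : PowerSeries R) + C (D t) * (X * geo 1)))
        - (geo 1) ^ (m + q + 1)) * ((1 - X) ^ (m + q + 1) * (Sser * geo 1))
      = Φ * (1 - X) ^ m - Sser * geo 1 := by
    rw [hprod2]
    have e1 : (Φ * ((∏ t, ((1 : PowerSeries R) + C (D t - 1) * X)) * (geo 1) ^ q)
          - (geo 1) ^ (m + q + 1)) * ((1 - X) ^ (m + q + 1) * (Sser * geo 1))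
        = Φ * ((∏ t, ((1 : PowerSeries R) + C (D t - 1) * X)) * Sser)
            * ((1 - X) ^ (q + 1) * (geo 1) ^ (q + 1)) * (1 - X) ^ m
          - Sser * geo 1 * ((1 - X) ^ (m + q + 1) * (geo 1) ^ (m + q + 1)) := by
      ring
    rw [e1, hSmul, hpow (q + 1), hpow (m + q + 1)]
    ring
  have hdvd2 : (X : PowerSeries R) ^ (m + 1) ∣ (Φ * (1 - X) ^ m - Sser * geo 1) := by
    rw [← hkey]
    exact hWdvd.mul_right _
  have hcoeff_eq : (PowerSeries.coeff m) (Φ * (1 - X) ^ m * geo k)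
      = (PowerSeries.coeff m) (Sser * geo 1 * geo k) := by
    have hd : (X : PowerSeries R) ^ (m + 1) ∣ ((Φ * (1 - X) ^ m - Sser * geo 1) * geo k) :=
      hdvd2.mul_right _
    have h0 := PowerSeries.X_pow_dvd_iff.mp hd m (lt_add_one m)
    rw [sub_mul, map_sub, sub_eq_zero] at h0
    exact h0
  -- compute coeff m (Φ * (1-X)^m * geo k)
  have hΦsum : Φ = ∑ i ∈ Finset.range (m + 1),
      C (tauW (m + q) q i D) * ((X : PowerSeries R) * geo 1) ^ i := by
    rw [hΦ, hTp, map_sum]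
    refine Finset.sum_congr rfl fun i _ => ?_
    rw [map_mul, map_pow, Polynomial.aeval_C, Polynomial.aeval_X, ← PowerSeries.C_eq_algebraMap]
  have hfin : (PowerSeries.coeff m) (Φ * (1 - X) ^ m * geo k)
      = ∑ i ∈ Finset.range (m + 1), tauW (m + q) q i D * (k - 1) ^ (m - i) := by
    rw [hΦsum, Finset.sum_mul, Finset.sum_mul, map_sum]
    refine Finset.sum_congr rfl fun i hi => ?_
    have him : i ≤ m := by rw [Finset.mem_range] at hi; omega
    have hm' : ((1 - X : PowerSeries R)) ^ m = (1 - X) ^ i * (1 - X) ^ (m - i) := by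
      rw [← pow_add]
      congr 1
      omega
    have e : C (tauW (m + q) q i D) * ((X : PowerSeries R) * geo 1) ^ i * (1 - X) ^ m * geo k
        = C (tauW (m + q) q i D) *
            ((X : PowerSeries R) ^ i * (((1 - X) ^ i * (geo 1) ^ i) *
              ((1 - X) ^ (m - i) * geo k))) := by
      rw [hm']
      ring
    rw [e, PowerSeries.coeff_C_mul, hpow i, one_mul]
    set p := m - i with hp
    rw [show m = p + i by omega, PowerSeries.coeff_X_pow_mul, coeff_one_sub_X_pow_mul_geo]
  -- compute the right-hand side
  have hSg : ∀ j, (PowerSeries.coeff j) (Sser * geo 1)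
      = ∑ δ ∈ Finset.range (j + 1), (-1 : R) ^ δ * wronski q δ (fun t => D t - 1) := by
    intro j
    rw [coeff_mul_geo]
    refine Finset.sum_congr rfl fun δ _ => ?_
    rw [one_pow, mul_one, hSser, coeff_mk]
    have he : (fun t => (1 : R) - D t) = fun t => -(D t - 1) := by funext t; ring
    rw [he, wronski_neg]
  have hR : ∑ j ∈ Finset.range (m + 1),
      (∑ δ ∈ Finset.range (j + 1), (-1 : R) ^ δ * wronski q δ (fun t => D t - 1)) * k ^ (m - j)
      = (PowerSeries.coeff m) (Sser * geo 1 * geo k) := by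
    rw [coeff_mul_geo]
    exact Finset.sum_congr rfl fun j _ => by rw [hSg j]
  rw [← hfin, hcoeff_eq, ← hR]

end SoaresAux

/-- Algebraic reformulation of Soares' count: for a smooth complete intersection
`V ⊂ Pⁿ` of multidegree `(d₁,…,d_{n−m})`, the coefficient identity
`∑_{i=0}^{m} τ_i^{(n−m)}(d₁,…,d_{n−m}) (k−1)^{m−i}
  = ∑_{j=0}^{m} [∑_{δ=0}^{j} (−1)^δ W_δ^{(n−m)}(d₁−1,…,d_{n−m}−1)] k^{m−j}`. -/
theorem stmt18 {R : Type*} [CommRing R] (n m : ℕ) (hmn : m ≤ n)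
    (D : Fin (n - m) → R) (k : R) :
    ∑ i ∈ Finset.range (m + 1), tauW n (n - m) i D * (k - 1) ^ (m - i) =
      ∑ j ∈ Finset.range (m + 1),
        (∑ δ ∈ Finset.range (j + 1),
          (-1 : R) ^ δ * wronski (n - m) δ (fun t => D t - 1)) * k ^ (m - j) := by
  have h := SoaresAux.key (R := R) m (n - m) D k
  rwa [Nat.add_sub_cancel' hmn] at h
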